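/- arXiv:2301.06384 — 2 statements merged into one kernel-verified Lean document; each statement's English description precedes it below -/
import Mathlib

section
/- Let L be a symmetric n×n matrix, E an n×N matrix, and suppose an n×mN matrix Q with Q^T Q = I and an mN×mN symmetric matrix H satisfy L^j E = Q H^j F for all j ∈ {0,...,m−1}, where F is an mN×N matrix with ‖F‖_F = √N and ‖E‖_F = √N. If φ = p + r where p is a polynomial of degree m−1, then ‖φ(L)E − Q φ(H) F‖_F ≤ √N (‖r(L)‖₂ + ‖r(H)‖₂). -/
noncomputable section
open Matrix Polynomial Set Filter

/-- The matrix function `φ(A)` of a symmetric matrix, defined via the spectral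
decomposition: apply `φ` to each eigenvalue. -/
noncomputable def matFun {n : ℕ} {A : Matrix (Fin n) (Fin n) ℝ} (hA : A.IsHermitian)
    (φ : ℝ → ℝ) : Matrix (Fin n) (Fin n) ℝ :=
  (hA.eigenvectorUnitary : Matrix (Fin n) (Fin n) ℝ) *
    Matrix.diagonal (fun i => φ (hA.eigenvalues i)) *
    star (hA.eigenvectorUnitary : Matrix (Fin n) (Fin n) ℝ)

/-- Spectral (ℓ²-operator) norm of a rectangular real matrix. -/
noncomputable def specNorm {a b : ℕ} (A : Matrix (Fin a) (Fin b) ℝ) : ℝ :=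
  ‖LinearMap.toContinuousLinearMap (Matrix.toEuclideanLin A)‖

/-- Frobenius norm of a rectangular real matrix. -/
noncomputable def frobNorm {a b : ℕ} (A : Matrix (Fin a) (Fin b) ℝ) : ℝ :=
  Real.sqrt (∑ i, ∑ j, (A i j) ^ 2)

/-- Euclidean norm of a vector. -/
noncomputable def euclNorm {a : ℕ} (v : Fin a → ℝ) : ℝ :=
  Real.sqrt (∑ i, (v i) ^ 2)

/-- The `n × N` block `E_W = [e_{w_1}, …, e_{w_N}]` of canonical unit vectors. -/
noncomputable def unitBlock {n N : ℕ} (w : Fin N → Fin n) : Matrix (Fin n) (Fin N) ℝ :=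
  fun i j => if w j = i then 1 else 0

/-! ### Auxiliary lemmas -/

lemma specNorm_nonneg {a b : ℕ} (A : Matrix (Fin a) (Fin b) ℝ) : 0 ≤ specNorm A :=
  norm_nonneg _

lemma frobNorm_nonneg {a b : ℕ} (A : Matrix (Fin a) (Fin b) ℝ) : 0 ≤ frobNorm A :=
  Real.sqrt_nonneg _

/-- Frobenius norm as the Euclidean norm of the flattened matrix. -/
lemma frobNorm_eq_norm {a b : ℕ} (A : Matrix (Fin a) (Fin b) ℝ) :
    frobNorm A = ‖(WithLp.equiv 2 (Fin a × Fin b → ℝ)).symm (fun p => A p.1 p.2)‖ := by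
  simp [frobNorm, EuclideanSpace.norm_eq, Real.norm_eq_abs, sq_abs, Fintype.sum_prod_type]

/-- Triangle inequality for the Frobenius norm of a difference. -/
lemma frobNorm_sub_le {a b : ℕ} (A B : Matrix (Fin a) (Fin b) ℝ) :
    frobNorm (A - B) ≤ frobNorm A + frobNorm B := by
  rw [frobNorm_eq_norm, frobNorm_eq_norm, frobNorm_eq_norm]
  have : (WithLp.equiv 2 (Fin a × Fin b → ℝ)).symm (fun p => (A - B) p.1 p.2) =
      (WithLp.equiv 2 (Fin a × Fin b → ℝ)).symm (fun p => A p.1 p.2) -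
      (WithLp.equiv 2 (Fin a × Fin b → ℝ)).symm (fun p => B p.1 p.2) := rfl
  rw [this]
  exact norm_sub_le _ _

/-- Operator norm bound for matrix-vector multiplication. -/
lemma mulVec_bound {a b : ℕ} (A : Matrix (Fin a) (Fin b) ℝ) (v : Fin b → ℝ) :
    Real.sqrt (∑ i, (A.mulVec v i) ^ 2) ≤ specNorm A * Real.sqrt (∑ i, (v i) ^ 2) := by
  have h := (LinearMap.toContinuousLinearMap (Matrix.toEuclideanLin A)).le_opNorm
    ((WithLp.equiv 2 (Fin b → ℝ)).symm v)
  simpa [specNorm, EuclideanSpace.norm_eq, Real.norm_eq_abs, sq_abs,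
    Matrix.toEuclideanLin_apply_piLp_toLp] using h

/-- `‖A B‖_F ≤ ‖A‖₂ ‖B‖_F`. -/
lemma frobNorm_mul_le {a b c : ℕ} (A : Matrix (Fin a) (Fin b) ℝ)
    (B : Matrix (Fin b) (Fin c) ℝ) :
    frobNorm (A * B) ≤ specNorm A * frobNorm B := by
  have hswap : ∀ {d e : ℕ} (X : Matrix (Fin d) (Fin e) ℝ),
      frobNorm X = Real.sqrt (∑ j, ∑ i, (X i j) ^ 2) := by
    intro d e X; rw [frobNorm, Finset.sum_comm]
  rw [hswap (A * B), hswap B]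
  have key : ∀ j, ∑ i, ((A * B) i j) ^ 2 ≤ specNorm A ^ 2 * ∑ i, (B i j) ^ 2 := by
    intro j
    have h1 : ∑ i, ((A * B) i j) ^ 2 = ∑ i, (A.mulVec (fun k => B k j) i) ^ 2 := by
      apply Finset.sum_congr rfl; intro i _
      simp [Matrix.mul_apply, Matrix.mulVec, dotProduct]
    have h2 := mulVec_bound A (fun k => B k j)
    have h3 : Real.sqrt (∑ i, (A.mulVec (fun k => B k j) i) ^ 2) ^ 2 ≤
        (specNorm A * Real.sqrt (∑ i, (B i j) ^ 2)) ^ 2 := by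
      apply sq_le_sq' _ h2
      have := Real.sqrt_nonneg (∑ i, (A.mulVec (fun k => B k j) i) ^ 2)
      nlinarith [mul_nonneg (specNorm_nonneg A) (Real.sqrt_nonneg (∑ i, (B i j) ^ 2))]
    rw [Real.sq_sqrt (by positivity), mul_pow, Real.sq_sqrt (by positivity)] at h3
    rw [h1]; exact h3
  calc Real.sqrt (∑ j, ∑ i, ((A * B) i j) ^ 2)
      ≤ Real.sqrt (∑ j, specNorm A ^ 2 * ∑ i, (B i j) ^ 2) := by
        apply Real.sqrt_le_sqrt
        exact Finset.sum_le_sum fun j _ => key j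
    _ = specNorm A * Real.sqrt (∑ j, ∑ i, (B i j) ^ 2) := by
        rw [← Finset.mul_sum, Real.sqrt_mul (by positivity),
          Real.sqrt_sq (specNorm_nonneg A)]

/-- Multiplication by a matrix with orthonormal columns preserves the Frobenius norm. -/
lemma frobNorm_orth_mul {a b c : ℕ} (Q : Matrix (Fin a) (Fin b) ℝ) (hQ : Qᵀ * Q = 1)
    (B : Matrix (Fin b) (Fin c) ℝ) : frobNorm (Q * B) = frobNorm B := by
  have key : (Q * B)ᵀ * (Q * B) = Bᵀ * B := by
    rw [Matrix.transpose_mul, Matrix.mul_assoc, ← Matrix.mul_assoc Qᵀ, hQ, Matrix.one_mul]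
  have hgen : ∀ {d e : ℕ} (X : Matrix (Fin d) (Fin e) ℝ),
      ∑ i, ∑ j, (X i j) ^ 2 = (Xᵀ * X).trace := by
    intro d e X
    rw [Matrix.trace, Finset.sum_comm]
    apply Finset.sum_congr rfl; intro j _
    simp [Matrix.mul_apply, Matrix.diag, sq]
  rw [frobNorm, frobNorm, hgen, hgen, key]

/-- `matFun` applied to `x ^ k` gives the matrix power. -/
lemma matFun_pow {n : ℕ} {A : Matrix (Fin n) (Fin n) ℝ} (hA : A.IsHermitian) (k : ℕ) :
    matFun hA (fun x => x ^ k) = A ^ k := by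
  have hUU : star (hA.eigenvectorUnitary : Matrix (Fin n) (Fin n) ℝ) *
      (hA.eigenvectorUnitary : Matrix (Fin n) (Fin n) ℝ) = 1 :=
    Matrix.mem_unitaryGroup_iff'.mp hA.eigenvectorUnitary.2
  have hUU' : (hA.eigenvectorUnitary : Matrix (Fin n) (Fin n) ℝ) *
      star (hA.eigenvectorUnitary : Matrix (Fin n) (Fin n) ℝ) = 1 :=
    Matrix.mem_unitaryGroup_iff.mp hA.eigenvectorUnitary.2
  have hspec : A = (hA.eigenvectorUnitary : Matrix (Fin n) (Fin n) ℝ) *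
      Matrix.diagonal hA.eigenvalues *
      star (hA.eigenvectorUnitary : Matrix (Fin n) (Fin n) ℝ) := by
    simpa using hA.spectral_theorem
  induction k with
  | zero => simp [matFun, hUU']
  | succ k ih =>
    have key : matFun hA (fun x => x ^ (k + 1)) = (matFun hA fun x => x ^ k) * A := by
      rw [matFun, matFun]
      conv_rhs => rw [show ((hA.eigenvectorUnitary : Matrix (Fin n) (Fin n) ℝ) *
        Matrix.diagonal (fun i => hA.eigenvalues i ^ k) *
        star (hA.eigenvectorUnitary : Matrix (Fin n) (Fin n) ℝ)) * A =
        ((hA.eigenvectorUnitary : Matrix (Fin n) (Fin n) ℝ) *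
        Matrix.diagonal (fun i => hA.eigenvalues i ^ k) *
        star (hA.eigenvectorUnitary : Matrix (Fin n) (Fin n) ℝ)) *
        ((hA.eigenvectorUnitary : Matrix (Fin n) (Fin n) ℝ) *
        Matrix.diagonal hA.eigenvalues *
        star (hA.eigenvectorUnitary : Matrix (Fin n) (Fin n) ℝ)) from by rw [← hspec]]
      simp only [Matrix.mul_assoc]
      rw [← Matrix.mul_assoc (star (hA.eigenvectorUnitary : Matrix (Fin n) (Fin n) ℝ))
        (hA.eigenvectorUnitary : Matrix (Fin n) (Fin n) ℝ), hUU, Matrix.one_mul,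
        ← Matrix.mul_assoc (Matrix.diagonal fun i => hA.eigenvalues i ^ k),
        Matrix.diagonal_mul_diagonal]
      simp [pow_succ]
    rw [key, ih, pow_succ]

/-- `matFun` of a polynomial evaluation is the polynomial applied to the matrix. -/
lemma matFun_poly {n : ℕ} {A : Matrix (Fin n) (Fin n) ℝ} (hA : A.IsHermitian)
    (p : Polynomial ℝ) : matFun hA (fun x => p.eval x) = Polynomial.aeval A p := by
  set U := (hA.eigenvectorUnitary : Matrix (Fin n) (Fin n) ℝ) with hU
  have hd : Matrix.diagonal (fun i => p.eval (hA.eigenvalues i)) =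
      ∑ j ∈ Finset.range (p.natDegree + 1),
        p.coeff j • Matrix.diagonal (fun i => hA.eigenvalues i ^ j) := by
    ext i k
    by_cases h : i = k
    · subst h
      simp [Matrix.sum_apply, Matrix.diagonal_apply_eq, Polynomial.eval_eq_sum_range,
        smul_eq_mul]
    · simp [Matrix.sum_apply, Matrix.diagonal_apply_ne _ h]
  calc matFun hA (fun x => p.eval x)
      = U * (∑ j ∈ Finset.range (p.natDegree + 1),
          p.coeff j • Matrix.diagonal (fun i => hA.eigenvalues i ^ j)) * star U := by
        rw [matFun, hd]
    _ = ∑ j ∈ Finset.range (p.natDegree + 1),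
          p.coeff j • (U * Matrix.diagonal (fun i => hA.eigenvalues i ^ j) * star U) := by
        rw [Finset.mul_sum, Finset.sum_mul]
        apply Finset.sum_congr rfl; intro j _
        rw [mul_smul_comm, smul_mul_assoc]
    _ = ∑ j ∈ Finset.range (p.natDegree + 1), p.coeff j • A ^ j := by
        apply Finset.sum_congr rfl; intro j _
        congr 1
        rw [← matFun_pow hA j, matFun]
    _ = Polynomial.aeval A p := (Polynomial.aeval_eq_sum_range (R := ℝ) A).symm

/-- `matFun` is additive in the function argument. -/
lemma matFun_add {n : ℕ} {A : Matrix (Fin n) (Fin n) ℝ} (hA : A.IsHermitian)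
    (f g : ℝ → ℝ) : matFun hA (fun x => f x + g x) = matFun hA f + matFun hA g := by
  rw [matFun, matFun, matFun]
  have : Matrix.diagonal (fun i => f (hA.eigenvalues i) + g (hA.eigenvalues i)) =
      Matrix.diagonal (fun i => f (hA.eigenvalues i)) +
      Matrix.diagonal (fun i => g (hA.eigenvalues i)) := by
    rw [Matrix.diagonal_add]
  rw [this, Matrix.mul_add, Matrix.add_mul]

/-- block Lanczos error lemma: if `L` is symmetric, `QᵀQ = I`, `H` is
symmetric, `Lʲ E = Q Hʲ F` for `j = 0, …, m−1`, `‖E‖_F = ‖F‖_F = √N`, and `φ = p + r` with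
`p` a polynomial of degree ≤ `m−1`, then
`‖φ(L)E − Q φ(H) F‖_F ≤ √N (‖r(L)‖₂ + ‖r(H)‖₂)`. -/
theorem stmt5 {n N m M : ℕ} (hm : 1 ≤ m)
    (L : Matrix (Fin n) (Fin n) ℝ) (hL : L.IsHermitian)
    (E : Matrix (Fin n) (Fin N) ℝ)
    (Q : Matrix (Fin n) (Fin M) ℝ) (hQ : Qᵀ * Q = 1)
    (H : Matrix (Fin M) (Fin M) ℝ) (hH : H.IsHermitian)
    (F : Matrix (Fin M) (Fin N) ℝ)
    (hE : frobNorm E = Real.sqrt N) (hF : frobNorm F = Real.sqrt N)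
    (hrel : ∀ j < m, L ^ j * E = Q * H ^ j * F)
    (φ r : ℝ → ℝ) (p : Polynomial ℝ) (hp : p.natDegree ≤ m - 1)
    (hsplit : ∀ x : ℝ, φ x = p.eval x + r x) :
    frobNorm (matFun hL φ * E - Q * matFun hH φ * F) ≤
      Real.sqrt N * (specNorm (matFun hL r) + specNorm (matFun hH r)) := by
  have hdeg : p.natDegree < m := lt_of_le_of_lt hp (by omega)
  -- polynomial part satisfies the relation
  have hpoly : (Polynomial.aeval L p : Matrix (Fin n) (Fin n) ℝ) * E =
      Q * (Polynomial.aeval H p : Matrix (Fin M) (Fin M) ℝ) * F := by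
    rw [Polynomial.aeval_eq_sum_range' hdeg, Polynomial.aeval_eq_sum_range' hdeg]
    rw [Matrix.sum_mul]
    rw [show Q * (∑ i ∈ Finset.range m, p.coeff i • H ^ i) * F =
        ∑ i ∈ Finset.range m, p.coeff i • (Q * H ^ i * F) by
      rw [Matrix.mul_sum, Matrix.sum_mul]
      apply Finset.sum_congr rfl; intro i _
      rw [Matrix.mul_smul, Matrix.smul_mul]]
    apply Finset.sum_congr rfl; intro i hi
    rw [Matrix.smul_mul, hrel i (Finset.mem_range.mp hi)]
  -- split matFun φ
  have hφ : φ = fun x => p.eval x + r x := funext hsplit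
  have hL' : matFun hL φ = Polynomial.aeval L p + matFun hL r := by
    rw [hφ, matFun_add, matFun_poly]
  have hH' : matFun hH φ = Polynomial.aeval H p + matFun hH r := by
    rw [hφ, matFun_add, matFun_poly]
  have hdiff : matFun hL φ * E - Q * matFun hH φ * F =
      matFun hL r * E - Q * (matFun hH r * F) := by
    rw [hL', hH', Matrix.add_mul, Matrix.mul_add, Matrix.add_mul, hpoly]
    rw [Matrix.mul_assoc Q (matFun hH r) F]
    abel
  rw [hdiff]
  calc frobNorm (matFun hL r * E - Q * (matFun hH r * F))
      ≤ frobNorm (matFun hL r * E) + frobNorm (Q * (matFun hH r * F)) :=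
        frobNorm_sub_le _ _
    _ = frobNorm (matFun hL r * E) + frobNorm (matFun hH r * F) := by
        rw [frobNorm_orth_mul Q hQ]
    _ ≤ specNorm (matFun hL r) * frobNorm E + specNorm (matFun hH r) * frobNorm F :=
        add_le_add (frobNorm_mul_le _ _) (frobNorm_mul_le _ _)
    _ = Real.sqrt N * (specNorm (matFun hL r) + specNorm (matFun hH r)) := by
        rw [hE, hF]; ring
end
end

section
/- Let φ be continuous on [0,Λ], L symmetric with spectrum in [0,Λ], E_W an n×N block of distinct unit vectors, γ ≥ 0, and φ_min = min φ > 0. Suppose P_m is a sequence of symmetric matrices with ‖φ(L)E_W − P_m E_W‖₂ → 0 and ‖E_W^T φ(L) E_W − E_W^T P_m E_W‖₂ → 0 as m → ∞. Then the approximate predictors y_m = P_m E_W (E_W^T P_m E_W + γN I_N)^{-1} y (defined for all m large enough that the inverse exists) converge to y* = φ(L)E_W (E_W^T φ(L)E_W + γN I_N)^{-1} y in Euclidean norm. -/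
noncomputable section
open Matrix Polynomial Set Filter

/-! ### Auxiliary lemmas -/

lemma abs_entry_le_specNorm {a b : ℕ} (A : Matrix (Fin a) (Fin b) ℝ) (i : Fin a) (j : Fin b) :
    |A i j| ≤ specNorm A := by
  have h := (LinearMap.toContinuousLinearMap (Matrix.toEuclideanLin A)).le_opNorm
      (EuclideanSpace.single j (1:ℝ))
  rw [EuclideanSpace.norm_single, norm_one, mul_one] at h
  refine le_trans ?_ h
  have happ : (LinearMap.toContinuousLinearMap (Matrix.toEuclideanLin A))
      (EuclideanSpace.single j (1:ℝ)) = (WithLp.equiv 2 (Fin a → ℝ)).symm (A *ᵥ Pi.single j 1) := by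
    rw [LinearMap.coe_toContinuousLinearMap', EuclideanSpace.single, Matrix.toEuclideanLin_apply]
    simp
  rw [happ, EuclideanSpace.norm_eq]
  have h1 : |A i j| = Real.sqrt (‖((WithLp.equiv 2 (Fin a → ℝ)).symm (A *ᵥ Pi.single j 1)) i‖ ^ 2) := by
    simp [Real.sqrt_sq_eq_abs, Matrix.mulVec_single]
  rw [h1]
  exact Real.sqrt_le_sqrt (Finset.single_le_sum
    (f := fun k => ‖((WithLp.equiv 2 (Fin a → ℝ)).symm (A *ᵥ Pi.single j 1)) k‖ ^ 2)
    (fun k _ => by positivity) (Finset.mem_univ i))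

lemma tendsto_of_specNorm {a b : ℕ} {F : ℕ → Matrix (Fin a) (Fin b) ℝ}
    {G : Matrix (Fin a) (Fin b) ℝ}
    (h : Filter.Tendsto (fun m => specNorm (G - F m)) Filter.atTop (nhds 0)) :
    Filter.Tendsto F Filter.atTop (nhds G) := by
  refine tendsto_pi_nhds.2 ?_; intro i; rw [tendsto_pi_nhds]; intro j
  have h0 : Filter.Tendsto (fun m => (G - F m) i j) Filter.atTop (nhds 0) :=
    squeeze_zero_norm (fun m => abs_entry_le_specNorm (G - F m) i j) h
  have h2 : Filter.Tendsto (fun m => G i j - (G - F m) i j) Filter.atTop (nhds (G i j - 0)) :=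
    tendsto_const_nhds.sub h0
  simpa using h2

lemma posdef_conj {k l : ℕ} {A : Matrix (Fin k) (Fin k) ℝ} (hA : A.PosDef)
    {B : Matrix (Fin k) (Fin l) ℝ} (hB : Function.Injective B.mulVec) :
    (Bᴴ * A * B).PosDef := by
  refine posDef_iff_dotProduct_mulVec.2 ⟨?_, ?_⟩
  · have h1 := hA.1
    unfold Matrix.IsHermitian at h1 ⊢
    rw [Matrix.conjTranspose_mul, Matrix.conjTranspose_mul, Matrix.conjTranspose_conjTranspose,
      h1, Matrix.mul_assoc]
  · intro x hx
    have hBx : B *ᵥ x ≠ 0 := fun h => hx (hB (by rw [h, Matrix.mulVec_zero]))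
    have key : star x ⬝ᵥ (Bᴴ * A * B) *ᵥ x = star (B *ᵥ x) ⬝ᵥ A *ᵥ (B *ᵥ x) := by
      rw [Matrix.mul_assoc, ← Matrix.mulVec_mulVec, Matrix.dotProduct_mulVec,
        ← Matrix.star_mulVec, ← Matrix.mulVec_mulVec]
    rw [key]
    exact hA.dotProduct_mulVec_pos hBx

lemma unitBlock_mulVec_injective {n N : ℕ} {w : Fin N → Fin n} (hw : Function.Injective w) :
    Function.Injective (unitBlock w).mulVec := by
  intro x y h
  funext j
  have h1 := congrFun h (w j)
  simpa [Matrix.mulVec, dotProduct, unitBlock, hw.eq_iff] using h1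

lemma matFun_posDef {n : ℕ} {Λ : ℝ} {L : Matrix (Fin n) (Fin n) ℝ} (hL : L.IsHermitian)
    (hev : ∀ i, hL.eigenvalues i ∈ Set.Icc (0 : ℝ) Λ)
    {φ : ℝ → ℝ} {φmin : ℝ} (hφmin : 0 < φmin)
    (hφ : ∀ lam ∈ Set.Icc (0 : ℝ) Λ, φmin ≤ φ lam) :
    (matFun hL φ).PosDef := by
  have hD : (Matrix.diagonal (fun i => φ (hL.eigenvalues i))).PosDef :=
    .diagonal (fun i => lt_of_lt_of_le hφmin (hφ _ (hev i)))
  have h1 : (hL.eigenvectorUnitary : Matrix (Fin n) (Fin n) ℝ) *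
      star (hL.eigenvectorUnitary : Matrix (Fin n) (Fin n) ℝ) = 1 :=
    Matrix.mem_unitaryGroup_iff.mp hL.eigenvectorUnitary.2
  have h2 : star (hL.eigenvectorUnitary : Matrix (Fin n) (Fin n) ℝ) *
      (hL.eigenvectorUnitary : Matrix (Fin n) (Fin n) ℝ) = 1 :=
    Matrix.mem_unitaryGroup_iff'.mp hL.eigenvectorUnitary.2
  have hUunit : IsUnit (star (hL.eigenvectorUnitary : Matrix (Fin n) (Fin n) ℝ)) :=
    ⟨⟨_, (hL.eigenvectorUnitary : Matrix (Fin n) (Fin n) ℝ), h2, h1⟩, rfl⟩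
  have hUinj : Function.Injective
      (star (hL.eigenvectorUnitary : Matrix (Fin n) (Fin n) ℝ)).mulVec :=
    Matrix.mulVec_injective_iff_isUnit.2 hUunit
  have heq : matFun hL φ
      = (star (hL.eigenvectorUnitary : Matrix (Fin n) (Fin n) ℝ))ᴴ *
        Matrix.diagonal (fun i => φ (hL.eigenvalues i)) *
        (star (hL.eigenvectorUnitary : Matrix (Fin n) (Fin n) ℝ)) := by
    rw [matFun, ← Matrix.star_eq_conjTranspose, star_star]
  rw [heq]
  exact posdef_conj hD hUinj

lemma smul_one_posSemidef {N : ℕ} {c : ℝ} (hc : 0 ≤ c) :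
    (c • (1 : Matrix (Fin N) (Fin N) ℝ)).PosSemidef := by
  refine posSemidef_iff_dotProduct_mulVec.2 ⟨?_, ?_⟩
  · unfold Matrix.IsHermitian
    rw [Matrix.conjTranspose_smul, Matrix.conjTranspose_one]
    simp
  · intro x
    rw [Matrix.smul_mulVec, Matrix.one_mulVec, dotProduct_smul]
    exact smul_nonneg hc (dotProduct_star_self_nonneg x)


lemma tendsto_matrix_inv {N : ℕ} {B : ℕ → Matrix (Fin N) (Fin N) ℝ}
    {C : Matrix (Fin N) (Fin N) ℝ} (hB : Filter.Tendsto B Filter.atTop (nhds C))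
    (hdet : C.det ≠ 0) :
    Filter.Tendsto (fun m => (B m)⁻¹) Filter.atTop (nhds C⁻¹) := by
  have hd : Filter.Tendsto (fun m => (B m).det) Filter.atTop (nhds C.det) :=
    ((continuous_id.matrix_det).tendsto C).comp hB
  have ha : Filter.Tendsto (fun m => (B m).adjugate) Filter.atTop (nhds C.adjugate) :=
    ((continuous_id.matrix_adjugate).tendsto C).comp hB
  simp only [Matrix.inv_def, Ring.inverse_eq_inv']
  exact (hd.inv₀ hdet).smul ha

/-- if symmetric approximations `P_m` satisfy `‖φ(L)E_W − P_m E_W‖₂ → 0` and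
`‖E_Wᵀ φ(L) E_W − E_Wᵀ P_m E_W‖₂ → 0`, then the approximate RLS predictors
`y_m = P_m E_W (E_Wᵀ P_m E_W + γN I_N)⁻¹ y` converge to the exact predictor
`y* = φ(L)E_W (E_Wᵀ φ(L)E_W + γN I_N)⁻¹ y`. -/
theorem stmt16 {n N : ℕ} (Λ : ℝ) (L : Matrix (Fin n) (Fin n) ℝ) (hL : L.IsHermitian)
    (hev : ∀ i, hL.eigenvalues i ∈ Set.Icc (0 : ℝ) Λ)
    (φ : ℝ → ℝ) (hφc : ContinuousOn φ (Set.Icc 0 Λ))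
    (φmin : ℝ) (hφmin : 0 < φmin) (hφ : ∀ lam ∈ Set.Icc (0 : ℝ) Λ, φmin ≤ φ lam)
    (w : Fin N → Fin n) (hw : Function.Injective w)
    (γ : ℝ) (hγ : 0 ≤ γ) (y : Fin N → ℝ)
    (P : ℕ → Matrix (Fin n) (Fin n) ℝ) (hPsym : ∀ m, (P m).IsHermitian)
    (hconv1 : Filter.Tendsto
      (fun m => specNorm (matFun hL φ * unitBlock w - P m * unitBlock w))
      Filter.atTop (nhds 0))
    (hconv2 : Filter.Tendsto
      (fun m => specNorm ((unitBlock w)ᵀ * matFun hL φ * unitBlock w -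
        (unitBlock w)ᵀ * P m * unitBlock w))
      Filter.atTop (nhds 0)) :
    Filter.Tendsto
      (fun m => (P m * unitBlock w *
        ((unitBlock w)ᵀ * P m * unitBlock w + (γ * N) • (1 : Matrix (Fin N) (Fin N) ℝ))⁻¹) *ᵥ y)
      Filter.atTop
      (nhds ((matFun hL φ * unitBlock w *
        ((unitBlock w)ᵀ * matFun hL φ * unitBlock w +
          (γ * N) • (1 : Matrix (Fin N) (Fin N) ℝ))⁻¹) *ᵥ y)) := by
  have hMPD : (matFun hL φ).PosDef := matFun_posDef hL hev hφmin hφ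
  have hEinj : Function.Injective (unitBlock w).mulVec := unitBlock_mulVec_injective hw
  have hEPD : ((unitBlock w)ᵀ * matFun hL φ * unitBlock w).PosDef := by
    rw [← Matrix.conjTranspose_eq_transpose_of_trivial]
    exact posdef_conj hMPD hEinj
  have hBPD : ((unitBlock w)ᵀ * matFun hL φ * unitBlock w +
      (γ * N) • (1 : Matrix (Fin N) (Fin N) ℝ)).PosDef :=
    hEPD.add_posSemidef (smul_one_posSemidef (mul_nonneg hγ (Nat.cast_nonneg N)))
  have hdetne : ((unitBlock w)ᵀ * matFun hL φ * unitBlock w +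
      (γ * N) • (1 : Matrix (Fin N) (Fin N) ℝ)).det ≠ 0 := hBPD.det_pos.ne'
  have hQ : Filter.Tendsto (fun m => P m * unitBlock w) Filter.atTop
      (nhds (matFun hL φ * unitBlock w)) := tendsto_of_specNorm hconv1
  have hBt : Filter.Tendsto
      (fun m => (unitBlock w)ᵀ * P m * unitBlock w +
        (γ * N) • (1 : Matrix (Fin N) (Fin N) ℝ)) Filter.atTop
      (nhds ((unitBlock w)ᵀ * matFun hL φ * unitBlock w +
        (γ * N) • (1 : Matrix (Fin N) (Fin N) ℝ))) :=
    (tendsto_of_specNorm hconv2).add tendsto_const_nhds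
  have hinv := tendsto_matrix_inv hBt hdetne
  have hpair := hQ.prodMk_nhds hinv
  have hcont : Continuous (fun p : Matrix (Fin n) (Fin N) ℝ × Matrix (Fin N) (Fin N) ℝ =>
      (p.1 * p.2) *ᵥ y) :=
    (continuous_fst.matrix_mul continuous_snd).matrix_mulVec continuous_const
  have hfin := (hcont.tendsto ((matFun hL φ * unitBlock w),
    ((unitBlock w)ᵀ * matFun hL φ * unitBlock w +
      (γ * N) • (1 : Matrix (Fin N) (Fin N) ℝ))⁻¹)).comp hpair
  exact hfin
end
end
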